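/- Let f : ℝ → ℝ be twice continuously differentiable in a neighborhood of t with f(t) > 0 and f'(t) ≠ 0, and let s, r ∈ ℝ. Then f(t−h)^s · f(t−2h)^r · f(t−3h)^{1−r−s} − f(t) = O(h²) as h → 0⁺ if and only if r + 2s − 3 = 0. -/

import Mathlib

open Filter Asymptotics Topology Set

/-- Characterization of the exponents of the second-order Patankar weight: for `f`
twice continuously differentiable near `t` with `f t > 0` and `f'(t) ≠ 0`,
`f(t−h)^s · f(t−2h)^r · f(t−3h)^{1−r−s} − f(t) = O(h²)` as `h → 0⁺`
if and only if `r + 2s − 3 = 0`. -/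
theorem mpms2_weight_order_iff
    (f : ℝ → ℝ) (t : ℝ) (hf : ContDiffAt ℝ 2 f t) (hft : 0 < f t)
    (hft' : deriv f t ≠ 0) (s r : ℝ) :
    ((fun h : ℝ =>
        f (t - h) ^ s * f (t - 2*h) ^ r * f (t - 3*h) ^ (1 - r - s) - f t)
      =O[𝓝[>] (0:ℝ)] fun h : ℝ => h ^ 2) ↔ r + 2*s - 3 = 0 := by
  set F : ℝ → ℝ := fun h : ℝ =>
    f (t - h) ^ s * f (t - 2*h) ^ r * f (t - 3*h) ^ (1 - r - s) with hFdef
  have hne : f t ≠ 0 := ne_of_gt hft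
  have hfd : HasDerivAt f (deriv f t) t :=
    (hf.differentiableAt (by norm_num)).hasDerivAt
  set d := deriv f t with hd
  -- inner affine maps
  have hin1 : HasDerivAt (fun h : ℝ => t - h) (-1) 0 := by
    simpa using (hasDerivAt_id (0:ℝ)).const_sub t
  have hin2 : HasDerivAt (fun h : ℝ => t - 2*h) (-2) 0 := by
    simpa using ((hasDerivAt_id (0:ℝ)).const_mul 2).const_sub t
  have hin3 : HasDerivAt (fun h : ℝ => t - 3*h) (-3) 0 := by
    simpa using ((hasDerivAt_id (0:ℝ)).const_mul 3).const_sub t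
  have hfd1 : HasDerivAt f d ((fun h : ℝ => t - h) 0) := by simpa using hfd
  have hfd2 : HasDerivAt f d ((fun h : ℝ => t - 2*h) 0) := by simpa using hfd
  have hfd3 : HasDerivAt f d ((fun h : ℝ => t - 3*h) 0) := by simpa using hfd
  have h1 : HasDerivAt (fun h : ℝ => f (t - h) ^ s) (d * (-1) * s * f t ^ (s-1)) 0 := by
    have := (hfd1.comp 0 hin1).rpow_const (p := s) (Or.inl (by simpa using hne))
    simpa [Function.comp] using this
  have h2 : HasDerivAt (fun h : ℝ => f (t - 2*h) ^ r) (d * (-2) * r * f t ^ (r-1)) 0 := by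
    have := (hfd2.comp 0 hin2).rpow_const (p := r) (Or.inl (by simpa using hne))
    simpa [Function.comp] using this
  have h3 : HasDerivAt (fun h : ℝ => f (t - 3*h) ^ (1-r-s))
      (d * (-3) * (1-r-s) * f t ^ (1-r-s-1)) 0 := by
    have := (hfd3.comp 0 hin3).rpow_const (p := 1-r-s) (Or.inl (by simpa using hne))
    simpa [Function.comp] using this
  have key : ∀ u v : ℝ, f t ^ u * f t ^ v = f t ^ (u+v) := fun u v =>
    (Real.rpow_add hft u v).symm
  have e1 : f t ^ (s-1) * f t ^ r * f t ^ (1-r-s) = 1 := by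
    rw [key, key, show s-1+r+(1-r-s) = 0 by ring, Real.rpow_zero]
  have e2 : f t ^ s * f t ^ (r-1) * f t ^ (1-r-s) = 1 := by
    rw [key, key, show s+(r-1)+(1-r-s) = 0 by ring, Real.rpow_zero]
  have e3 : f t ^ s * f t ^ r * f t ^ (1-r-s-1) = 1 := by
    rw [key, key, show s+r+(1-r-s-1) = 0 by ring, Real.rpow_zero]
  have hF0 : F 0 = f t := by
    have : F 0 = f t ^ s * f t ^ r * f t ^ (1-r-s) := by
      simp [hFdef]
    rw [this, key, key, show s+r+(1-r-s) = 1 by ring, Real.rpow_one]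
  have hFderiv : HasDerivAt F (d * (r + 2*s - 3)) 0 := by
    have H := (h1.mul h2).mul h3
    simp only [mul_zero, sub_zero] at H
    exact H.congr_deriv (by
      simp only [Pi.mul_apply, mul_zero, sub_zero]
      linear_combination (-(d*s)) * e1 + (-(2*d*r)) * e2 + (-(3*d*(1-r-s))) * e3)
  constructor
  · -- O(h^2) implies r + 2s - 3 = 0
    intro hO
    by_contra hrs
    have hD : d * (r + 2*s - 3) ≠ 0 := mul_ne_zero hft' (sub_ne_zero.2 (by
      intro h; exact hrs (by linarith)))
    have hlo : (fun h : ℝ => F h - F 0 - h * (d * (r + 2*s - 3)))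
        =o[𝓝[>] (0:ℝ)] fun h : ℝ => h := by
      have := (hasDerivAt_iff_isLittleO.1 hFderiv).mono
        (show 𝓝[>] (0:ℝ) ≤ 𝓝 0 from nhdsWithin_le_nhds)
      simpa [smul_eq_mul] using this
    have hsq : (fun h : ℝ => h^2) =o[𝓝[>] (0:ℝ)] fun h : ℝ => h := by
      have h1 : (fun h : ℝ => h) =o[𝓝[>] (0:ℝ)] (fun _ => (1:ℝ)) :=
        (isLittleO_one_iff ℝ).2 (tendsto_id.mono_left nhdsWithin_le_nhds)
      have := h1.mul_isBigO (isBigO_refl (fun h : ℝ => h) (𝓝[>] (0:ℝ)))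
      simpa [pow_two] using this
    have hO' : (fun h : ℝ => F h - F 0) =o[𝓝[>] (0:ℝ)] fun h : ℝ => h := by
      have := hO.trans_isLittleO hsq
      simpa [hF0] using this
    have hlin : (fun h : ℝ => (d * (r + 2*s - 3)) * h) =o[𝓝[>] (0:ℝ)] fun h : ℝ => h := by
      have := hO'.sub hlo
      simpa [mul_comm] using this
    rw [isLittleO_const_mul_left_iff hD] at hlin
    obtain ⟨x, hx1, hx2⟩ := ((hlin.def one_half_pos).and self_mem_nhdsWithin).exists
    have hx0 : (0:ℝ) < x := hx2
    rw [Real.norm_eq_abs, abs_of_pos hx0] at hx1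
    linarith
  · -- r + 2s - 3 = 0 implies O(h^2)
    intro hrs
    have hF'0 : HasDerivAt F 0 0 := by
      have : d * (r + 2*s - 3) = 0 := by rw [hrs, mul_zero]
      rwa [this] at hFderiv
    -- smoothness of F at 0
    have hC : ContDiffAt ℝ 2 F 0 := by
      have i1 : ContDiffAt ℝ 2 (fun h : ℝ => t - h) 0 :=
        (contDiff_const.sub contDiff_id).contDiffAt
      have i2 : ContDiffAt ℝ 2 (fun h : ℝ => t - 2*h) 0 :=
        (contDiff_const.sub (contDiff_const.mul contDiff_id)).contDiffAt
      have i3 : ContDiffAt ℝ 2 (fun h : ℝ => t - 3*h) 0 :=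
        (contDiff_const.sub (contDiff_const.mul contDiff_id)).contDiffAt
      have c1 : ContDiffAt ℝ 2 (fun h : ℝ => f (t - h)) 0 := by
        have := (show ContDiffAt ℝ 2 f ((fun h : ℝ => t - h) 0) by simpa using hf).comp 0 i1
        exact this
      have c2 : ContDiffAt ℝ 2 (fun h : ℝ => f (t - 2*h)) 0 := by
        have := (show ContDiffAt ℝ 2 f ((fun h : ℝ => t - 2*h) 0) by simpa using hf).comp 0 i2
        exact this
      have c3 : ContDiffAt ℝ 2 (fun h : ℝ => f (t - 3*h)) 0 := by
        have := (show ContDiffAt ℝ 2 f ((fun h : ℝ => t - 3*h) 0) by simpa using hf).comp 0 i3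
        exact this
      exact ((c1.rpow_const_of_ne (by simpa using hne)).mul
        (c2.rpow_const_of_ne (by simpa using hne))).mul
        (c3.rpow_const_of_ne (by simpa using hne))
    obtain ⟨u, hu, hCu⟩ := hC.contDiffOn le_rfl (by simp)
    obtain ⟨ε, hε, hball⟩ := Metric.mem_nhds_iff.1 hu
    set δ := ε/2 with hδ
    have hδ0 : 0 < δ := by positivity
    have hsub : Icc (0:ℝ) δ ⊆ u := fun x hx => hball (by
      simp only [Metric.mem_ball, Real.dist_eq, sub_zero]
      rw [abs_of_nonneg hx.1]; linarith [hx.2])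
    have hCon : ContDiffOn ℝ 2 F (Icc 0 δ) := hCu.mono hsub
    obtain ⟨C, hC2⟩ := exists_taylor_mean_remainder_bound (n := 1) (le_of_lt hδ0) (by
      exact_mod_cast hCon)
    have hud : UniqueDiffWithinAt ℝ (Icc (0:ℝ) δ) 0 :=
      (uniqueDiffOn_Icc hδ0) 0 ⟨le_refl _, le_of_lt hδ0⟩
    have htay : ∀ x : ℝ, taylorWithinEval F 1 (Icc 0 δ) 0 x = F 0 := by
      intro x
      rw [taylorWithinEval_succ, taylor_within_zero_eval]
      have : iteratedDerivWithin 1 F (Icc 0 δ) 0 = 0 := by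
        rw [iteratedDerivWithin_one,
          hF'0.differentiableAt.derivWithin hud, hF'0.deriv]
      rw [this]
      simp
    rw [Asymptotics.isBigO_iff]
    refine ⟨C, ?_⟩
    filter_upwards [Ioc_mem_nhdsGT hδ0] with x hx
    have hmem : x ∈ Icc (0:ℝ) δ := ⟨le_of_lt hx.1, hx.2⟩
    have := hC2 x hmem
    rw [htay x] at this
    calc ‖F x - f t‖ = ‖F x - F 0‖ := by rw [hF0]
      _ ≤ C * (x - 0)^2 := this
      _ = C * ‖x^2‖ := by rw [sub_zero]; congr 1; rw [Real.norm_eq_abs, abs_of_nonneg (by positivity)]
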